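/- For every RML formula φ over Π and every n ≥ 1, there exists a simple Mean-GNN with truncated ReLU activation ReLU*(x) = min(max(0,x),1) that accepts a pointed Π-labeled graph (G,v) with at most n vertices if and only if G,v ⊨ φ. -/

import Mathlib

open scoped Classical

/-- A `α`-labeled finite directed graph. -/
structure LabeledGraph (α : Type) : Type 1 where
  V : Type
  [fintypeV : Fintype V]
  adj : V → V → Prop
  label : V → α → Prop

attribute [instance] LabeledGraph.fintypeV

namespace LabeledGraph

variable {α : Type}

/-- The neighborhood (set of successors) of a vertex. -/
def nbhd (G : LabeledGraph α) (v : G.V) : Set G.V := {u | G.adj v u}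

/-- The neighborhood of a vertex, as a finset. -/
noncomputable def nbhdFinset (G : LabeledGraph α) (v : G.V) : Finset G.V :=
  Finset.univ.filter (fun u => G.adj v u)

/-- The `c`-scaling of a graph: each vertex is multiplied `c` times. -/
def scale (G : LabeledGraph α) (c : ℕ) : LabeledGraph α where
  V := G.V × Fin c
  adj := fun p q => G.adj p.1 q.1
  label := fun p => G.label p.1

end LabeledGraph

/-- Formulas of modal logic ML. -/
inductive ML (α : Type) : Type where
  | atom : α → ML α
  | neg  : ML α → ML α
  | or   : ML α → ML α → ML α
  | dia  : ML α → ML α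

/-- Satisfaction for ML. -/
def ML.sat {α : Type} (G : LabeledGraph α) : ML α → G.V → Prop
  | .atom p, v => G.label v p
  | .neg φ, v => ¬ ML.sat G φ v
  | .or φ ψ, v => ML.sat G φ v ∨ ML.sat G ψ v
  | .dia φ, v => ∃ u, G.adj v u ∧ ML.sat G φ u

/-- Formulas of graded modal logic GML. -/
inductive GML (α : Type) : Type where
  | atom : α → GML α
  | neg  : GML α → GML α
  | or   : GML α → GML α → GML α
  | dia  : ℕ → GML α → GML α

/-- Satisfaction for GML: `dia n φ` is `◊^{≥n} φ`. -/
def GML.sat {α : Type} (G : LabeledGraph α) : GML α → G.V → Prop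
  | .atom p, v => G.label v p
  | .neg φ, v => ¬ GML.sat G φ v
  | .or φ ψ, v => GML.sat G φ v ∨ GML.sat G ψ v
  | .dia n φ, v => n ≤ {u | G.adj v u ∧ GML.sat G φ u}.ncard

/-- Formulas of ratio modal logic RML; diamonds carry a ratio `r ∈ [0,1]`. -/
inductive RML (α : Type) : Type where
  | atom  : α → RML α
  | neg   : RML α → RML α
  | or    : RML α → RML α → RML α
  | diaGe : Set.Icc (0:ℝ) 1 → RML α → RML α
  | diaGt : Set.Icc (0:ℝ) 1 → RML α → RML α

/-- Satisfaction for RML. If a vertex has no successors then `◊^{≥r}φ`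
holds and `◊^{>r}φ` fails; otherwise the fraction of successors satisfying
`φ` is compared with `r`. -/
noncomputable def RML.sat {α : Type} (G : LabeledGraph α) : RML α → G.V → Prop
  | .atom p, v => G.label v p
  | .neg φ, v => ¬ RML.sat G φ v
  | .or φ ψ, v => RML.sat G φ v ∨ RML.sat G ψ v
  | .diaGe r φ, v => (G.nbhd v).Nonempty →
      (r : ℝ) ≤ ({u | G.adj v u ∧ RML.sat G φ u}.ncard : ℝ) / ((G.nbhd v).ncard : ℝ)
  | .diaGt r φ, v => (G.nbhd v).Nonempty ∧
      (r : ℝ) < ({u | G.adj v u ∧ RML.sat G φ u}.ncard : ℝ) / ((G.nbhd v).ncard : ℝ)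

/-- Formulas of AFML[1] (diamond fragment of alternation-free modal logic). -/
inductive AFML1 (α : Type) : Type where
  | atom   : α → AFML1 α
  | natom  : α → AFML1 α
  | boxBot : AFML1 α
  | and    : AFML1 α → AFML1 α → AFML1 α
  | or     : AFML1 α → AFML1 α → AFML1 α
  | dia    : AFML1 α → AFML1 α

/-- Satisfaction for AFML[1]. -/
def AFML1.sat {α : Type} (G : LabeledGraph α) : AFML1 α → G.V → Prop
  | .atom p, v => G.label v p
  | .natom p, v => ¬ G.label v p
  | .boxBot, v => ∀ u, ¬ G.adj v u
  | .and φ ψ, v => AFML1.sat G φ v ∧ AFML1.sat G ψ v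
  | .or φ ψ, v => AFML1.sat G φ v ∨ AFML1.sat G ψ v
  | .dia φ, v => ∃ u, G.adj v u ∧ AFML1.sat G φ u

/-- Modal depth of an AFML[1] formula. -/
def AFML1.depth {α : Type} : AFML1 α → ℕ
  | .atom _ => 0
  | .natom _ => 0
  | .boxBot => 1
  | .and φ ψ => max (AFML1.depth φ) (AFML1.depth ψ)
  | .or φ ψ => max (AFML1.depth φ) (AFML1.depth ψ)
  | .dia φ => AFML1.depth φ + 1

/-- Formulas of AFML[2] (box fragment of alternation-free modal logic). -/
inductive AFML2 (α : Type) : Type where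
  | atom   : α → AFML2 α
  | natom  : α → AFML2 α
  | diaTop : AFML2 α
  | and    : AFML2 α → AFML2 α → AFML2 α
  | or     : AFML2 α → AFML2 α → AFML2 α
  | box    : AFML2 α → AFML2 α

/-- Satisfaction for AFML[2]. -/
def AFML2.sat {α : Type} (G : LabeledGraph α) : AFML2 α → G.V → Prop
  | .atom p, v => G.label v p
  | .natom p, v => ¬ G.label v p
  | .diaTop, v => ∃ u, G.adj v u
  | .and φ ψ, v => AFML2.sat G φ v ∧ AFML2.sat G ψ v
  | .or φ ψ, v => AFML2.sat G φ v ∨ AFML2.sat G ψ v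
  | .box φ, v => ∀ u, G.adj v u → AFML2.sat G φ u

/-- Alternation-free modal logic: AFML[1] formulas together with AFML[2] formulas. -/
def AFML (α : Type) : Type := AFML1 α ⊕ AFML2 α

/-- Satisfaction for AFML. -/
def AFML.sat {α : Type} (G : LabeledGraph α) : AFML α → G.V → Prop
  | .inl φ => AFML1.sat G φ
  | .inr φ => AFML2.sat G φ

/-- The three aggregation functions. -/
inductive Agg : Type where
  | sum : Agg
  | mean : Agg
  | max : Agg

/-- Apply an aggregation function componentwise to the (multiset of) values of `x`
over the finset `s`; empty aggregation yields `0` (so mean of the empty multiset is `0`). -/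
noncomputable def Agg.apply {V : Type} : Agg → Finset V → (V → ℝ) → ℝ
  | .sum, s, x => ∑ u ∈ s, x u
  | .mean, s, x => (∑ u ∈ s, x u) / (s.card : ℝ)
  | .max, s, x => if h : s.Nonempty then s.sup' h x else 0

/-- A GNN: `L` layers, dimensions `δ 0, …, δ L` with `δ 0 = |α|`,
combination functions `com ℓ : ℝ^{δ ℓ} × ℝ^{δ ℓ} → ℝ^{δ (ℓ+1)}` for `ℓ < L`,
and a threshold classification function `CLS(x) = 1 iff x_clsIdx ∼ clsThr`
where `∼` is `>` if `clsStrict` and `≥` otherwise. -/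
structure GNN (α : Type) [Fintype α] : Type where
  L : ℕ
  δ : ℕ → ℕ
  hδ0 : δ 0 = Fintype.card α
  com : (ℓ : ℕ) → (Fin (δ ℓ) → ℝ) → (Fin (δ ℓ) → ℝ) → (Fin (δ (ℓ+1)) → ℝ)
  clsIdx : Fin (δ L)
  clsStrict : Bool
  clsThr : ℝ

/-- The feature vector computed by a GNN (with aggregation `agg`) at layer `ℓ`
at vertex `v` of graph `G`. Layer 0 yields the 0/1 indicator vector of the labels. -/
noncomputable def GNN.feat {α : Type} [Fintype α] (𝒢 : GNN α) (agg : Agg)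
    (G : LabeledGraph α) : (ℓ : ℕ) → G.V → Fin (𝒢.δ ℓ) → ℝ
  | 0, v, i => if G.label v ((Fintype.equivFin α).symm (Fin.cast 𝒢.hδ0 i)) then 1 else 0
  | (ℓ+1), v, i =>
      𝒢.com ℓ (𝒢.feat agg G ℓ v)
        (fun j => agg.apply (G.nbhdFinset v) (fun u => 𝒢.feat agg G ℓ u j)) i

/-- The GNN accepts a pointed graph iff the classification function outputs 1 on
the final feature vector. -/
noncomputable def GNN.accepts {α : Type} [Fintype α] (𝒢 : GNN α) (agg : Agg)
    (G : LabeledGraph α) (v : G.V) : Prop :=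
  if 𝒢.clsStrict then 𝒢.clsThr < 𝒢.feat agg G 𝒢.L v 𝒢.clsIdx
  else 𝒢.clsThr ≤ 𝒢.feat agg G 𝒢.L v 𝒢.clsIdx

/-- A GNN is simple with activation function `f` if each combination function
has the form `COM(x_v, x_a) = f(x_v·C + x_a·A + b)` (componentwise `f`). -/
def GNN.IsSimple {α : Type} [Fintype α] (𝒢 : GNN α) (f : ℝ → ℝ) : Prop :=
  ∀ ℓ < 𝒢.L, ∃ (C A : Fin (𝒢.δ ℓ) → Fin (𝒢.δ (ℓ+1)) → ℝ) (b : Fin (𝒢.δ (ℓ+1)) → ℝ),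
    ∀ (xv xa : Fin (𝒢.δ ℓ) → ℝ) (i : Fin (𝒢.δ (ℓ+1))),
      𝒢.com ℓ xv xa i = f ((∑ j, xv j * C j i) + (∑ j, xa j * A j i) + b i)

/-- All combination functions of the GNN are continuous. -/
def GNN.HasContinuousCom {α : Type} [Fintype α] (𝒢 : GNN α) : Prop :=
  ∀ ℓ < 𝒢.L,
    Continuous (fun p : (Fin (𝒢.δ ℓ) → ℝ) × (Fin (𝒢.δ ℓ) → ℝ) => 𝒢.com ℓ p.1 p.2)

/-- Truncated ReLU. -/
noncomputable def reluStar : ℝ → ℝ := fun x => min (max 0 x) 1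

/-- ReLU. -/
noncomputable def relu : ℝ → ℝ := fun x => max 0 x

/-- Two pointed graphs have the same vertex labels at their distinguished vertices. -/
def labelsEq {α : Type} (G1 G2 : LabeledGraph α) (v1 : G1.V) (v2 : G2.V) : Prop :=
  ∀ p, G1.label v1 p ↔ G2.label v2 p

/-- Spoiler wins the `ℓ`-round ML game on `((G1,v1),(G2,v2))`. -/
def spoilerWinsML {α : Type} (G1 G2 : LabeledGraph α) : ℕ → G1.V → G2.V → Prop
  | 0, v1, v2 => ¬ labelsEq G1 G2 v1 v2
  | (ℓ+1), v1, v2 =>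
      ¬ labelsEq G1 G2 v1 v2
      ∨ (∃ u1, G1.adj v1 u1 ∧ ∀ u2, G2.adj v2 u2 → spoilerWinsML G1 G2 ℓ u1 u2)
      ∨ (∃ u2, G2.adj v2 u2 ∧ ∀ u1, G1.adj v1 u1 → spoilerWinsML G1 G2 ℓ u1 u2)

/-- Spoiler wins the `ℓ`-round AFML[1] game on `((G1,v1),(G2,v2))`. -/
def spoilerWinsAFML1 {α : Type} (G1 G2 : LabeledGraph α) : ℕ → G1.V → G2.V → Prop
  | 0, v1, v2 => ¬ labelsEq G1 G2 v1 v2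
  | (ℓ+1), v1, v2 =>
      ¬ labelsEq G1 G2 v1 v2
      ∨ ((∀ u, ¬ G1.adj v1 u) ∧ (∃ u, G2.adj v2 u))
      ∨ (∃ u1, G1.adj v1 u1 ∧ ∀ u2, G2.adj v2 u2 → spoilerWinsAFML1 G1 G2 ℓ u1 u2)

/-- Spoiler wins the `ℓ`-round GML game with counting bound `c` on `((G1,v1),(G2,v2))`. -/
def spoilerWinsGML {α : Type} (c : ℕ) (G1 G2 : LabeledGraph α) : ℕ → G1.V → G2.V → Prop
  | 0, v1, v2 => ¬ labelsEq G1 G2 v1 v2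
  | (ℓ+1), v1, v2 =>
      ¬ labelsEq G1 G2 v1 v2
      ∨ (∃ U1 : Finset G1.V, (∀ u ∈ U1, G1.adj v1 u) ∧ 0 < U1.card ∧ U1.card ≤ c ∧
          ((G2.nbhd v2).ncard < U1.card ∨
            ∀ U2 : Finset G2.V, (∀ u ∈ U2, G2.adj v2 u) → U2.card = U1.card →
              ∃ u2 ∈ U2, ∀ u1 ∈ U1, spoilerWinsGML c G1 G2 ℓ u1 u2))
      ∨ (∃ U2 : Finset G2.V, (∀ u ∈ U2, G2.adj v2 u) ∧ 0 < U2.card ∧ U2.card ≤ c ∧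
          ((G1.nbhd v1).ncard < U2.card ∨
            ∀ U1 : Finset G1.V, (∀ u ∈ U1, G1.adj v1 u) → U1.card = U2.card →
              ∃ u1 ∈ U1, ∀ u2 ∈ U2, spoilerWinsGML c G1 G2 ℓ u1 u2))

/-- The ratio `1/2` as an element of `[0,1]`. -/
noncomputable def half : Set.Icc (0:ℝ) 1 := ⟨1/2, by norm_num⟩

namespace Stmt4

open Classical

noncomputable def ind (P : Prop) : ℝ := if P then 1 else 0

lemma ind_cases (P : Prop) : ind P = 0 ∨ ind P = 1 := by
  unfold ind; by_cases h : P <;> simp [h]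

lemma reluStar_ind (P : Prop) : reluStar (ind P) = ind P := by
  unfold reluStar ind; by_cases h : P <;> simp [h]

lemma reluStar_one_sub_ind (P : Prop) : reluStar (1 - ind P) = ind (¬ P) := by
  unfold reluStar ind; by_cases h : P <;> norm_num [h]

lemma reluStar_add_ind (P Q : Prop) : reluStar (ind P + ind Q) = ind (P ∨ Q) := by
  unfold reluStar ind
  by_cases h : P <;> by_cases h' : Q <;> norm_num [h, h']

lemma reluStar_of_one_le {x : ℝ} (h : 1 ≤ x) : reluStar x = 1 := by
  unfold reluStar
  rw [max_eq_right (le_trans zero_le_one h), min_eq_right h]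

lemma reluStar_of_nonpos {x : ℝ} (h : x ≤ 0) : reluStar x = 0 := by
  unfold reluStar
  rw [max_eq_left h, min_eq_left zero_le_one]

lemma sum_ite_nat {d : ℕ} (x : Fin d → ℝ) (a : ℕ) (ha : a < d) (c : ℝ) :
    ∑ j, x j * (if j.val = a then c else 0) = x ⟨a, ha⟩ * c := by
  have h : ∀ j : Fin d, x j * (if j.val = a then c else 0)
      = (if j = ⟨a, ha⟩ then x j * c else 0) := by
    intro j
    by_cases hj : j = ⟨a, ha⟩
    · simp [hj]
    · have : j.val ≠ a := by
        intro hv; exact hj (Fin.ext hv)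
      simp [hj, this]
  rw [Finset.sum_congr rfl (fun j _ => h j),
    Finset.sum_ite_eq' Finset.univ (⟨a, ha⟩ : Fin d) (fun j => x j * c)]
  simp

lemma sum_ite_nat_out {d : ℕ} (x : Fin d → ℝ) (a : ℕ) (ha : d ≤ a) (c : ℝ) :
    ∑ j, x j * (if j.val = a then c else 0) = 0 := by
  apply Finset.sum_eq_zero
  intro j _
  have : j.val ≠ a := by omega
  simp [this]

/-! ### ratios with bounded numerator/denominator, and gaps -/

noncomputable def ratios (n : ℕ) : Finset ℝ :=
  ((Finset.range (n+1)) ×ˢ (Finset.range (n+1))).image fun pq => (pq.1 : ℝ) / (pq.2 : ℝ)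

lemma mem_ratios {n p q : ℕ} (hp : p ≤ n) (hq : q ≤ n) : ((p : ℝ) / (q : ℝ)) ∈ ratios n := by
  apply Finset.mem_image.2
  exact ⟨(p, q), Finset.mem_product.2 ⟨Finset.mem_range.2 (by omega), Finset.mem_range.2 (by omega)⟩, rfl⟩

noncomputable def gapBelow (n : ℕ) (r : ℝ) : ℝ :=
  if h : ((ratios n).filter (· < r)).Nonempty then r - ((ratios n).filter (· < r)).max' h else 1

lemma gapBelow_pos (n : ℕ) (r : ℝ) : 0 < gapBelow n r := by
  unfold gapBelow
  split_ifs with h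
  · have := ((ratios n).filter (· < r)).max'_mem h
    have := (Finset.mem_filter.1 this).2
    linarith
  · norm_num

lemma le_sub_gapBelow {n : ℕ} {r a : ℝ} (ha : a ∈ ratios n) (h : a < r) :
    a ≤ r - gapBelow n r := by
  have hmem : a ∈ (ratios n).filter (· < r) := Finset.mem_filter.2 ⟨ha, h⟩
  unfold gapBelow
  rw [dif_pos ⟨a, hmem⟩]
  have := Finset.le_max' _ a hmem
  linarith

noncomputable def gapAbove (n : ℕ) (r : ℝ) : ℝ :=
  if h : ((ratios n).filter (r < ·)).Nonempty then ((ratios n).filter (r < ·)).min' h - r else 1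

lemma gapAbove_pos (n : ℕ) (r : ℝ) : 0 < gapAbove n r := by
  unfold gapAbove
  split_ifs with h
  · have := ((ratios n).filter (r < ·)).min'_mem h
    have := (Finset.mem_filter.1 this).2
    linarith
  · norm_num

lemma add_gapAbove_le {n : ℕ} {r a : ℝ} (ha : a ∈ ratios n) (h : r < a) :
    r + gapAbove n r ≤ a := by
  have hmem : a ∈ (ratios n).filter (r < ·) := Finset.mem_filter.2 ⟨ha, h⟩
  unfold gapAbove
  rw [dif_pos ⟨a, hmem⟩]
  have := Finset.min'_le _ a hmem
  linarith

end Stmt4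

namespace Stmt4

open Classical

variable {α : Type}

/-- The list of subformulas, children before parents. -/
def subs : RML α → List (RML α)
  | .atom p => [.atom p]
  | .neg ψ => subs ψ ++ [.neg ψ]
  | .or ψ χ => subs ψ ++ subs χ ++ [.or ψ χ]
  | .diaGe r ψ => subs ψ ++ [.diaGe r ψ]
  | .diaGt r ψ => subs ψ ++ [.diaGt r ψ]

lemma mem_subs (φ : RML α) : φ ∈ subs φ := by
  cases φ <;> simp [subs]

lemma subs_snoc (φ : RML α) : ∃ l' : List (RML α), subs φ = l' ++ [φ] := by
  cases φ with
  | atom p => exact ⟨[], rfl⟩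
  | neg ψ => exact ⟨subs ψ, rfl⟩
  | or ψ χ => exact ⟨subs ψ ++ subs χ, by simp [subs]⟩
  | diaGe r ψ => exact ⟨subs ψ, rfl⟩
  | diaGt r ψ => exact ⟨subs ψ, rfl⟩

/-- The condition on children of `φ` at position `m` of list `l`. -/
def ChildOK (l : List (RML α)) (m : ℕ) (φ : RML α) : Prop :=
  match φ with
  | .atom _ => True
  | .neg ψ => ∃ j, j < m ∧ l[j]? = some ψ
  | .or ψ χ => (∃ j, j < m ∧ l[j]? = some ψ) ∧ (∃ j, j < m ∧ l[j]? = some χ)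
  | .diaGe _ ψ => ∃ j, j < m ∧ l[j]? = some ψ
  | .diaGt _ ψ => ∃ j, j < m ∧ l[j]? = some ψ

/-- Children of each list element occur strictly earlier in the list. -/
def Good (l : List (RML α)) : Prop :=
  ∀ m : ℕ, ∀ φ : RML α, l[m]? = some φ → ChildOK l m φ

lemma childOK_mono {l1 l2 : List (RML α)} {m m' : ℕ} {φ : RML α}
    (hmono : ∀ c : RML α, (∃ j, j < m ∧ l1[j]? = some c) → ∃ j, j < m' ∧ l2[j]? = some c)
    (h : ChildOK l1 m φ) : ChildOK l2 m' φ := by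
  cases φ with
  | atom p => trivial
  | neg ψ => exact hmono _ h
  | or ψ χ => exact ⟨hmono _ h.1, hmono _ h.2⟩
  | diaGe r ψ => exact hmono _ h
  | diaGt r ψ => exact hmono _ h

lemma getElem?_append_lt {l1 l2 : List (RML α)} {m : ℕ} (h : m < l1.length) :
    (l1 ++ l2)[m]? = l1[m]? := by
  rw [List.getElem?_append_left h]

lemma good_append {l1 l2 : List (RML α)} (h1 : Good l1) (h2 : Good l2) :
    Good (l1 ++ l2) := by
  intro m φ hm
  by_cases h : m < l1.length
  · rw [getElem?_append_lt h] at hm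
    refine childOK_mono ?_ (h1 m φ hm)
    rintro c ⟨j, hj, hjc⟩
    exact ⟨j, hj, by rw [getElem?_append_lt (by omega)]; exact hjc⟩
  · push_neg at h
    rw [List.getElem?_append_right h] at hm
    refine childOK_mono ?_ (h2 _ φ hm)
    rintro c ⟨j, hj, hjc⟩
    refine ⟨l1.length + j, by omega, ?_⟩
    rw [List.getElem?_append_right (by omega)]
    simpa using hjc

lemma exists_idx_of_mem {l : List (RML α)} {ψ : RML α} (h : ψ ∈ l) :
    ∃ j, j < l.length ∧ l[j]? = some ψ := by
  obtain ⟨j, hj, hget⟩ := List.getElem_of_mem h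
  exact ⟨j, hj, by rw [List.getElem?_eq_getElem hj]; exact congrArg some hget⟩

lemma good_snoc {l : List (RML α)} {φ : RML α} (h1 : Good l)
    (hch : match φ with
      | .atom _ => True
      | .neg ψ => ψ ∈ l
      | .or ψ χ => ψ ∈ l ∧ χ ∈ l
      | .diaGe _ ψ => ψ ∈ l
      | .diaGt _ ψ => ψ ∈ l) : Good (l ++ [φ]) := by
  intro m χ hm
  by_cases h : m < l.length
  · rw [getElem?_append_lt h] at hm
    refine childOK_mono ?_ (h1 m χ hm)
    rintro c ⟨j, hj, hjc⟩
    exact ⟨j, hj, by rw [getElem?_append_lt (by omega)]; exact hjc⟩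
  · push_neg at h
    have hlen : m < l.length + 1 := by
      have := (List.getElem?_eq_some_iff.1 hm).1
      simpa using this
    have hm' : m = l.length := by omega
    subst hm'
    have hφ : χ = φ := by
      rw [List.getElem?_append_right h] at hm
      simpa using hm.symm
    subst hφ
    have liftmem : ∀ c : RML α, c ∈ l → ∃ j, j < l.length ∧ (l ++ [χ])[j]? = some c := by
      intro c hc
      obtain ⟨j, hj, hjc⟩ := exists_idx_of_mem hc
      exact ⟨j, hj, by rw [getElem?_append_lt hj]; exact hjc⟩
    cases χ with
    | atom p => trivial
    | neg ψ => exact liftmem _ hch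
    | or ψ χ' => exact ⟨liftmem _ hch.1, liftmem _ hch.2⟩
    | diaGe r ψ => exact liftmem _ hch
    | diaGt r ψ => exact liftmem _ hch

lemma good_subs (φ : RML α) : Good (subs φ) := by
  induction φ with
  | atom p =>
      intro m χ hm
      have hlen : m < 1 := by simpa [subs] using (List.getElem?_eq_some_iff.1 hm).1
      interval_cases m
      simp [subs] at hm
      subst hm; trivial
  | neg ψ ih => exact good_snoc ih (mem_subs ψ)
  | or ψ χ ih1 ih2 =>
      exact good_snoc (good_append ih1 ih2)
        ⟨List.mem_append.2 (Or.inl (mem_subs ψ)), List.mem_append.2 (Or.inr (mem_subs χ))⟩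
  | diaGe r ψ ih => exact good_snoc ih (mem_subs ψ)
  | diaGt r ψ ih => exact good_snoc ih (mem_subs ψ)

/-- Chosen index of an earlier occurrence of `ψ` before position `m`. -/
noncomputable def childIdx (l : List (RML α)) (m : ℕ) (ψ : RML α) : ℕ :=
  if h : ∃ j, j < m ∧ l[j]? = some ψ then h.choose else 0

lemma childIdx_spec {l : List (RML α)} {m : ℕ} {ψ : RML α}
    (h : ∃ j, j < m ∧ l[j]? = some ψ) :
    childIdx l m ψ < m ∧ l[childIdx l m ψ]? = some ψ := by
  rw [childIdx, dif_pos h]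
  exact h.choose_spec

end Stmt4

namespace Stmt4

open Classical

variable {α : Type} [Fintype α]

/-- Feature dimension: atom indicators, a constant-one slot, one slot per list entry. -/
def dim (l : List (RML α)) : ℕ := Fintype.card α + 1 + l.length

lemma cα_lt_dim (l : List (RML α)) : Fintype.card α < dim l := by unfold dim; omega

def idxC (l : List (RML α)) : Fin (dim l) := ⟨Fintype.card α, cα_lt_dim l⟩

lemma idxF_lt {l : List (RML α)} {m : ℕ} (h : m < l.length) :
    Fintype.card α + 1 + m < dim l := by unfold dim; omega

def idxF (l : List (RML α)) (m : ℕ) (h : m < l.length) : Fin (dim l) :=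
  ⟨Fintype.card α + 1 + m, idxF_lt h⟩

/-- Layer-0 combination matrix (copy atoms). -/
def C0 (l : List (RML α)) (j : Fin (Fintype.card α)) (i : Fin (dim l)) : ℝ :=
  if j.val = i.val then 1 else 0

/-- Layer-0 bias (create constant-one slot). -/
def b0 (l : List (RML α)) (i : Fin (dim l)) : ℝ :=
  if i.val = Fintype.card α then 1 else 0

/-- Matrix applied to the vertex features at layer `m+1` (computing formula `m`). -/
noncomputable def Cmat (l : List (RML α)) (m : ℕ) (j i : Fin (dim l)) : ℝ :=
  if i.val = Fintype.card α + 1 + m then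
    match l[m]? with
    | some (.atom p) => if j.val = (Fintype.equivFin α p).val then 1 else 0
    | some (.neg ψ) =>
        if j.val = Fintype.card α + 1 + childIdx l m ψ then -1 else 0
    | some (.or ψ χ) =>
        (if j.val = Fintype.card α + 1 + childIdx l m ψ then 1 else 0)
          + (if j.val = Fintype.card α + 1 + childIdx l m χ then 1 else 0)
    | _ => 0
  else if j.val = i.val then 1 else 0

/-- Matrix applied to the aggregated features at layer `m+1`. -/
noncomputable def Amat (n : ℕ) (l : List (RML α)) (m : ℕ) (j i : Fin (dim l)) : ℝ :=
  if i.val = Fintype.card α + 1 + m then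
    match l[m]? with
    | some (.diaGe r ψ) =>
        (if j.val = Fintype.card α + 1 + childIdx l m ψ then (1 / gapBelow n r) else 0)
          + (if j.val = Fintype.card α then -((1 / gapBelow n r) * r) else 0)
    | some (.diaGt r ψ) =>
        (if j.val = Fintype.card α + 1 + childIdx l m ψ then (1 / gapAbove n r) else 0)
          + (if j.val = Fintype.card α then -((1 / gapAbove n r) * r) else 0)
    | _ => 0
  else 0

/-- Bias at layer `m+1`. -/
noncomputable def bvec (l : List (RML α)) (m : ℕ) (i : Fin (dim l)) : ℝ :=
  if i.val = Fintype.card α + 1 + m then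
    match l[m]? with
    | some (.neg _) => 1
    | some (.diaGe _ _) => 1
    | _ => 0
  else 0

/-- The GNN built from a (good) list of formulas. -/
noncomputable def gnn (n : ℕ) (l : List (RML α)) (i0 : Fin (dim l)) : GNN α where
  L := l.length + 1
  δ := fun ℓ => match ℓ with
    | 0 => Fintype.card α
    | _ + 1 => dim l
  hδ0 := rfl
  com := fun ℓ => match ℓ with
    | 0 => fun xv _xa i =>
        reluStar ((∑ j, xv j * C0 l j i) + (∑ j, xv j * (0:ℝ)) + b0 l i)
    | m + 1 => fun xv xa i =>
        reluStar ((∑ j, xv j * Cmat l m j i) + (∑ j, xa j * Amat n l m j i) + bvec l m i)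
  clsIdx := i0
  clsStrict := false
  clsThr := 1

lemma gnn_simple (n : ℕ) (l : List (RML α)) (i0 : Fin (dim l)) :
    (gnn n l i0).IsSimple reluStar := by
  intro ℓ hℓ
  cases ℓ with
  | zero =>
      exact ⟨C0 l, fun _ _ => 0, b0 l, fun xv xa i => by
        simp only [gnn, mul_zero, Finset.sum_const_zero]
        rfl⟩
  | succ m =>
      exact ⟨Cmat l m, Amat n l m, bvec l m, fun xv xa i => by
        simp only [gnn]
        rfl⟩

lemma com_zero (n : ℕ) (l : List (RML α)) (i0 : Fin (dim l))
    (xv xa : Fin (Fintype.card α) → ℝ) (i : Fin (dim l)) :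
    (gnn n l i0).com 0 xv xa i = reluStar ((∑ j, xv j * C0 l j i) + b0 l i) := by
  show reluStar _ = _
  congr 1
  simp

lemma com_succ (n : ℕ) (l : List (RML α)) (i0 : Fin (dim l)) (m : ℕ)
    (xv xa : Fin (dim l) → ℝ) (i : Fin (dim l)) :
    (gnn n l i0).com (m+1) xv xa i
      = reluStar ((∑ j, xv j * Cmat l m j i) + (∑ j, xa j * Amat n l m j i) + bvec l m i) := rfl

lemma feat_succ {𝒢 : GNN α} (agg : Agg) (G : LabeledGraph α) (ℓ : ℕ) (v : G.V)
    (i : Fin (𝒢.δ (ℓ+1))) :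
    𝒢.feat agg G (ℓ+1) v i
      = 𝒢.com ℓ (𝒢.feat agg G ℓ v)
          (fun j => agg.apply (G.nbhdFinset v) (fun u => 𝒢.feat agg G ℓ u j)) i := rfl

lemma mean_apply {V : Type} [Fintype V] (s : Finset V) (x : V → ℝ) :
    Agg.mean.apply s x = (∑ u ∈ s, x u) / (s.card : ℝ) := rfl

end Stmt4

set_option linter.unusedSectionVars false

namespace Stmt4

open Classical

variable {α : Type} [Fintype α]

lemma ind_of_true {P : Prop} (h : P) : ind P = 1 := if_pos h
lemma ind_of_false {P : Prop} (h : ¬ P) : ind P = 0 := if_neg h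

lemma idxC_val (l : List (RML α)) : (idxC l).val = Fintype.card α := rfl
lemma idxF_val (l : List (RML α)) (m : ℕ) (h : m < l.length) :
    (idxF l m h).val = Fintype.card α + 1 + m := rfl

lemma sum_ite_add {d : ℕ} (x : Fin d → ℝ) (a1 a2 : ℕ) (h1 : a1 < d) (h2 : a2 < d) (c1 c2 : ℝ) :
    ∑ j, x j * ((if j.val = a1 then c1 else 0) + (if j.val = a2 then c2 else 0))
      = x ⟨a1, h1⟩ * c1 + x ⟨a2, h2⟩ * c2 := by
  simp only [mul_add, Finset.sum_add_distrib, sum_ite_nat _ _ h1, sum_ite_nat _ _ h2]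

lemma nbhd_ncard (G : LabeledGraph α) (v : G.V) :
    (G.nbhd v).ncard = (G.nbhdFinset v).card := by
  rw [Set.ncard_eq_toFinset_card']
  congr 1
  ext u
  simp [LabeledGraph.nbhd, LabeledGraph.nbhdFinset]
  exact Set.mem_toFinset

lemma satSet_ncard (G : LabeledGraph α) (v : G.V) (ψ : RML α) :
    {u | G.adj v u ∧ RML.sat G ψ u}.ncard
      = ((G.nbhdFinset v).filter (fun u => RML.sat G ψ u)).card := by
  rw [Set.ncard_eq_toFinset_card']
  congr 1
  ext u
  simp [LabeledGraph.nbhdFinset, Finset.mem_filter]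

lemma nbhd_nonempty_iff (G : LabeledGraph α) (v : G.V) :
    (G.nbhd v).Nonempty ↔ (G.nbhdFinset v).Nonempty := by
  constructor
  · rintro ⟨u, hu⟩
    exact ⟨u, by simpa [LabeledGraph.nbhdFinset, LabeledGraph.nbhd] using hu⟩
  · rintro ⟨u, hu⟩
    exact ⟨u, by simpa [LabeledGraph.nbhdFinset, LabeledGraph.nbhd] using hu⟩

lemma sum_ind {V : Type} [Fintype V] (s : Finset V) (P : V → Prop) :
    ∑ u ∈ s, ind (P u) = ((s.filter P).card : ℝ) := by
  unfold ind
  rw [Finset.sum_boole]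

/-- The main invariant. -/
lemma invariant (n : ℕ) (l : List (RML α)) (hg : Good l) (i0 : Fin (dim l))
    (G : LabeledGraph α) (hG : Fintype.card G.V ≤ n) :
    ∀ t : ℕ, ∀ v : G.V,
      (∀ i : Fin (dim l), ∀ hi : i.val < Fintype.card α,
        (gnn n l i0).feat Agg.mean G (t+1) v i
          = ind (G.label v ((Fintype.equivFin α).symm ⟨i.val, hi⟩)))
      ∧ ((gnn n l i0).feat Agg.mean G (t+1) v (idxC l) = 1)
      ∧ (∀ m (hm : m < l.length) (ψ : RML α), l[m]? = some ψ → m < t →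
          (gnn n l i0).feat Agg.mean G (t+1) v (idxF l m hm) = ind (RML.sat G ψ v)) := by
  intro t
  induction t with
  | zero =>
    intro v
    refine ⟨?_, ?_, ?_⟩
    · intro i hi
      rw [show (gnn n l i0).feat Agg.mean G (0+1) v i = _ from com_zero n l i0 _ _ i]
      have hC : ∀ j : Fin (Fintype.card α), C0 l j i = if j.val = i.val then 1 else 0 :=
        fun j => rfl
      rw [Finset.sum_congr rfl (fun j _ => by rw [hC j]),
        sum_ite_nat (fun j : Fin (Fintype.card α) => (gnn n l i0).feat Agg.mean G 0 v j) i.val hi 1]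
      have hb : b0 l i = 0 := if_neg (by omega)
      rw [hb, mul_one, add_zero]
      have : (gnn n l i0).feat Agg.mean G 0 v ⟨i.val, hi⟩
          = ind (G.label v ((Fintype.equivFin α).symm ⟨i.val, hi⟩)) := rfl
      exact (congrArg reluStar this).trans (reluStar_ind _)
    · rw [show (gnn n l i0).feat Agg.mean G (0+1) v (idxC l) = _ from com_zero n l i0 _ _ (idxC l)]
      have hC : ∀ j : Fin (Fintype.card α), C0 l j (idxC l) = 0 := by
        intro j
        have : j.val ≠ (idxC l).val := by
          rw [idxC_val]; omega
        exact if_neg this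
      rw [Finset.sum_congr rfl (fun j _ => by rw [hC j, mul_zero]),
        Finset.sum_const_zero]
      have hb : b0 l (idxC l) = 1 := if_pos rfl
      rw [hb, zero_add, reluStar_of_one_le le_rfl]
    · intro m hm ψ hsome hmt
      omega
  | succ t ih =>
    intro v
    have hfs : ∀ i : Fin (dim l),
        (gnn n l i0).feat Agg.mean G (t+1+1) v i
          = reluStar ((∑ j, (gnn n l i0).feat Agg.mean G (t+1) v j * Cmat l t j i)
              + (∑ j, (Agg.mean.apply (G.nbhdFinset v)
                  (fun u => (gnn n l i0).feat Agg.mean G (t+1) u j)) * Amat n l t j i)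
              + bvec l t i) := fun i => rfl
    refine ⟨?_, ?_, ?_⟩
    · intro i hi
      rw [hfs i]
      have hC : ∀ j : Fin (dim l), Cmat l t j i = if j.val = i.val then 1 else 0 := by
        intro j; unfold Cmat; rw [if_neg (by omega)]
      have hA : ∀ j : Fin (dim l), Amat n l t j i = 0 := by
        intro j; unfold Amat; rw [if_neg (by omega)]
      have hb : bvec l t i = 0 := by unfold bvec; rw [if_neg (by omega)]
      rw [Finset.sum_congr rfl (fun j _ => by rw [hC j]),
        sum_ite_nat ((gnn n l i0).feat Agg.mean G (t+1) v) i.val i.isLt 1,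
        Finset.sum_congr rfl (fun j _ => by rw [hA j, mul_zero]),
        Finset.sum_const_zero, mul_one, add_zero, hb, add_zero]
      have h1 : (gnn n l i0).feat Agg.mean G (t+1) v ⟨i.val, i.isLt⟩
          = ind (G.label v ((Fintype.equivFin α).symm ⟨i.val, hi⟩)) := (ih v).1 i hi
      rw [h1, reluStar_ind]
    · rw [hfs (idxC l)]
      have hC : ∀ j : Fin (dim l), Cmat l t j (idxC l)
          = if j.val = (idxC l).val then 1 else 0 := by
        intro j; unfold Cmat; rw [if_neg (by rw [idxC_val]; omega)]
      have hA : ∀ j : Fin (dim l), Amat n l t j (idxC l) = 0 := by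
        intro j; unfold Amat; rw [if_neg (by rw [idxC_val]; omega)]
      have hb : bvec l t (idxC l) = 0 := by
        unfold bvec; rw [if_neg (by rw [idxC_val]; omega)]
      rw [Finset.sum_congr rfl (fun j _ => by rw [hC j]),
        sum_ite_nat ((gnn n l i0).feat Agg.mean G (t+1) v) (idxC l).val (idxC l).isLt 1,
        Finset.sum_congr rfl (fun j _ => by rw [hA j, mul_zero]),
        Finset.sum_const_zero, mul_one, add_zero, hb, add_zero]
      have h1 : (gnn n l i0).feat Agg.mean G (t+1) v ⟨(idxC l).val, (idxC l).isLt⟩ = 1 :=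
        (ih v).2.1
      rw [h1, reluStar_of_one_le le_rfl]
    · intro m hm ψ hsome hmt
      by_cases hlt : m < t
      · -- copy
        rw [hfs (idxF l m hm)]
        have hC : ∀ j : Fin (dim l), Cmat l t j (idxF l m hm)
            = if j.val = (idxF l m hm).val then 1 else 0 := by
          intro j; unfold Cmat; rw [if_neg (by rw [idxF_val]; omega)]
        have hA : ∀ j : Fin (dim l), Amat n l t j (idxF l m hm) = 0 := by
          intro j; unfold Amat; rw [if_neg (by rw [idxF_val]; omega)]
        have hb : bvec l t (idxF l m hm) = 0 := by
          unfold bvec; rw [if_neg (by rw [idxF_val]; omega)]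
        rw [Finset.sum_congr rfl (fun j _ => by rw [hC j]),
          sum_ite_nat ((gnn n l i0).feat Agg.mean G (t+1) v) (idxF l m hm).val
            (idxF l m hm).isLt 1,
          Finset.sum_congr rfl (fun j _ => by rw [hA j, mul_zero]),
          Finset.sum_const_zero, mul_one, add_zero, hb, add_zero]
        have h1 : (gnn n l i0).feat Agg.mean G (t+1) v
            ⟨(idxF l m hm).val, (idxF l m hm).isLt⟩ = ind (RML.sat G ψ v) :=
          (ih v).2.2 m hm ψ hsome hlt
        rw [h1, reluStar_ind]
      · -- compute formula m = t
        have hmt' : m = t := by omega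
        subst hmt'
        rw [hfs (idxF l m hm)]
        have hpos := idxF_val l m hm
        obtain ⟨l0, hl0⟩ : True := trivial
        cases hψ : ψ with
        | atom p =>
          subst hψ
          have hC : ∀ j : Fin (dim l), Cmat l m j (idxF l m hm)
              = if j.val = (Fintype.equivFin α p).val then 1 else 0 := by
            intro j; unfold Cmat; rw [if_pos hpos, hsome]
          have hA : ∀ j : Fin (dim l), Amat n l m j (idxF l m hm) = 0 := by
            intro j; unfold Amat; rw [if_pos hpos, hsome]
          have hb : bvec l m (idxF l m hm) = 0 := by
            unfold bvec; rw [if_pos hpos, hsome]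
          rw [Finset.sum_congr rfl (fun j _ => by rw [hC j]),
            sum_ite_nat ((gnn n l i0).feat Agg.mean G (m+1) v) (Fintype.equivFin α p).val
              (lt_trans (Fin.is_lt _) (cα_lt_dim l)) 1,
            Finset.sum_congr rfl (fun j _ => by rw [hA j, mul_zero]),
            Finset.sum_const_zero, mul_one, add_zero, hb, add_zero]
          have h1 : (gnn n l i0).feat Agg.mean G (m+1) v
              ⟨(Fintype.equivFin α p).val, lt_trans (Fin.is_lt _) (cα_lt_dim l)⟩
              = ind (G.label v ((Fintype.equivFin α).symm
                  ⟨(Fintype.equivFin α p).val, Fin.is_lt (Fintype.equivFin α p)⟩)) :=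
            (ih v).1 ⟨(Fintype.equivFin α p).val, lt_trans (Fin.is_lt _) (cα_lt_dim l)⟩
              (Fin.is_lt (Fintype.equivFin α p))
          rw [h1, reluStar_ind]
          have h2 : (Fintype.equivFin α).symm
              ⟨(Fintype.equivFin α p).val, Fin.is_lt (Fintype.equivFin α p)⟩ = p := by
            have : (⟨(Fintype.equivFin α p).val, Fin.is_lt (Fintype.equivFin α p)⟩ : Fin (Fintype.card α))
                = Fintype.equivFin α p := rfl
            rw [this, Equiv.symm_apply_apply]
          rw [h2]
          rfl
        | neg ψ' =>
          subst hψ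
          have hch : ∃ j, j < m ∧ l[j]? = some ψ' := hg m _ hsome
          obtain ⟨hci, hcisome⟩ := childIdx_spec hch
          have hcil : childIdx l m ψ' < l.length := (List.getElem?_eq_some_iff.1 hcisome).1
          have hC : ∀ j : Fin (dim l), Cmat l m j (idxF l m hm)
              = if j.val = Fintype.card α + 1 + childIdx l m ψ' then -1 else 0 := by
            intro j; unfold Cmat; rw [if_pos hpos, hsome]
          have hA : ∀ j : Fin (dim l), Amat n l m j (idxF l m hm) = 0 := by
            intro j; unfold Amat; rw [if_pos hpos, hsome]
          have hb : bvec l m (idxF l m hm) = 1 := by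
            unfold bvec; rw [if_pos hpos, hsome]
          rw [Finset.sum_congr rfl (fun j _ => by rw [hC j]),
            sum_ite_nat ((gnn n l i0).feat Agg.mean G (m+1) v)
              (Fintype.card α + 1 + childIdx l m ψ') (idxF_lt hcil) (-1),
            Finset.sum_congr rfl (fun j _ => by rw [hA j, mul_zero]),
            Finset.sum_const_zero, add_zero, hb]
          have h1 : (gnn n l i0).feat Agg.mean G (m+1) v
              ⟨Fintype.card α + 1 + childIdx l m ψ', idxF_lt hcil⟩
              = ind (RML.sat G ψ' v) := (ih v).2.2 _ hcil ψ' hcisome hci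
          rw [h1]
          have h2 : ind (RML.sat G ψ' v) * -1 + 1 = 1 - ind (RML.sat G ψ' v) := by ring
          rw [h2, reluStar_one_sub_ind]
          rfl
        | or ψ' χ' =>
          subst hψ
          have hch : (∃ j, j < m ∧ l[j]? = some ψ') ∧ (∃ j, j < m ∧ l[j]? = some χ') :=
            hg m _ hsome
          obtain ⟨hci1, hcisome1⟩ := childIdx_spec hch.1
          obtain ⟨hci2, hcisome2⟩ := childIdx_spec hch.2
          have hcil1 : childIdx l m ψ' < l.length := (List.getElem?_eq_some_iff.1 hcisome1).1
          have hcil2 : childIdx l m χ' < l.length := (List.getElem?_eq_some_iff.1 hcisome2).1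
          have hC : ∀ j : Fin (dim l), Cmat l m j (idxF l m hm)
              = (if j.val = Fintype.card α + 1 + childIdx l m ψ' then 1 else 0)
                + (if j.val = Fintype.card α + 1 + childIdx l m χ' then 1 else 0) := by
            intro j; unfold Cmat; rw [if_pos hpos, hsome]
          have hA : ∀ j : Fin (dim l), Amat n l m j (idxF l m hm) = 0 := by
            intro j; unfold Amat; rw [if_pos hpos, hsome]
          have hb : bvec l m (idxF l m hm) = 0 := by
            unfold bvec; rw [if_pos hpos, hsome]
          rw [Finset.sum_congr rfl (fun j _ => by rw [hC j]),
            sum_ite_add ((gnn n l i0).feat Agg.mean G (m+1) v) _ _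
              (idxF_lt hcil1) (idxF_lt hcil2) 1 1,
            Finset.sum_congr rfl (fun j _ => by rw [hA j, mul_zero]),
            Finset.sum_const_zero, add_zero, hb, add_zero, mul_one, mul_one]
          have h1 : (gnn n l i0).feat Agg.mean G (m+1) v
              ⟨Fintype.card α + 1 + childIdx l m ψ', idxF_lt hcil1⟩
              = ind (RML.sat G ψ' v) := (ih v).2.2 _ hcil1 ψ' hcisome1 hci1
          have h2 : (gnn n l i0).feat Agg.mean G (m+1) v
              ⟨Fintype.card α + 1 + childIdx l m χ', idxF_lt hcil2⟩
              = ind (RML.sat G χ' v) := (ih v).2.2 _ hcil2 χ' hcisome2 hci2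
          rw [h1, h2, reluStar_add_ind]
          rfl
        | diaGe r ψ' =>
          subst hψ
          have hch : ∃ j, j < m ∧ l[j]? = some ψ' := hg m _ hsome
          obtain ⟨hci, hcisome⟩ := childIdx_spec hch
          have hcil : childIdx l m ψ' < l.length := (List.getElem?_eq_some_iff.1 hcisome).1
          set g := gapBelow n (r : ℝ) with hgdef
          have hg0 : 0 < g := gapBelow_pos n (r : ℝ)
          have hC : ∀ j : Fin (dim l), Cmat l m j (idxF l m hm) = 0 := by
            intro j; unfold Cmat; rw [if_pos hpos, hsome]
          have hA : ∀ j : Fin (dim l), Amat n l m j (idxF l m hm)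
              = (if j.val = Fintype.card α + 1 + childIdx l m ψ' then (1 / g) else 0)
                + (if j.val = Fintype.card α then -((1 / g) * (r : ℝ)) else 0) := by
            intro j; unfold Amat; rw [if_pos hpos, hsome]
          have hb : bvec l m (idxF l m hm) = 1 := by
            unfold bvec; rw [if_pos hpos, hsome]
          rw [Finset.sum_congr rfl (fun j _ => by rw [hC j, mul_zero]),
            Finset.sum_const_zero,
            Finset.sum_congr rfl (fun j _ => by rw [hA j]),
            sum_ite_add (fun j : Fin ((gnn n l i0).δ (m+1)) => Agg.mean.apply (G.nbhdFinset v)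
                (fun u => (gnn n l i0).feat Agg.mean G (m+1) u j)) _ _
              (idxF_lt hcil) (cα_lt_dim l) (1 / g) (-((1 / g) * (r : ℝ))),
            hb, zero_add]
          -- evaluate the two aggregated values
          have hxa1 : Agg.mean.apply (G.nbhdFinset v)
              (fun u => (gnn n l i0).feat Agg.mean G (m+1) u
                ⟨Fintype.card α + 1 + childIdx l m ψ', idxF_lt hcil⟩)
              = (((G.nbhdFinset v).filter (fun u => RML.sat G ψ' u)).card : ℝ)
                  / ((G.nbhdFinset v).card : ℝ) := by
            rw [mean_apply]
            congr 1
            have hup : ∀ u : G.V, (gnn n l i0).feat Agg.mean G (m+1) u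
                ⟨Fintype.card α + 1 + childIdx l m ψ', idxF_lt hcil⟩
                = ind (RML.sat G ψ' u) := fun u => (ih u).2.2 _ hcil ψ' hcisome hci
            rw [Finset.sum_congr rfl (fun u _ => hup u), sum_ind]
          have hxa2 : Agg.mean.apply (G.nbhdFinset v)
              (fun u => (gnn n l i0).feat Agg.mean G (m+1) u
                ⟨Fintype.card α, cα_lt_dim l⟩)
              = ind ((G.nbhd v).Nonempty) := by
            have hup2 : ∀ u : G.V, (gnn n l i0).feat Agg.mean G (m+1) u
                ⟨Fintype.card α, cα_lt_dim l⟩ = (1:ℝ) := fun u => (ih u).2.1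
            rw [mean_apply, Finset.sum_congr rfl (fun u _ => hup2 u),
              Finset.sum_const, nsmul_eq_mul, mul_one]
            by_cases hN : (G.nbhdFinset v).card = 0
            · rw [hN, ind_of_false]
              · norm_num
              · rw [nbhd_nonempty_iff, ← Finset.card_pos, hN]
                simp
            · rw [div_self (by exact_mod_cast hN), ind_of_true]
              rw [nbhd_nonempty_iff, ← Finset.card_pos]
              omega
          rw [hxa1, hxa2]
          set K := ((G.nbhdFinset v).filter (fun u => RML.sat G ψ' u)).card with hK
          set N := (G.nbhdFinset v).card with hN
          have hsat : RML.sat G (RML.diaGe r ψ') v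
              ↔ ((G.nbhd v).Nonempty → (r : ℝ) ≤ (K : ℝ) / (N : ℝ)) := by
            show ((G.nbhd v).Nonempty →
              (r : ℝ) ≤ ({u | G.adj v u ∧ RML.sat G ψ' u}.ncard : ℝ) / ((G.nbhd v).ncard : ℝ)) ↔ _
            rw [satSet_ncard, nbhd_ncard]
          by_cases hN0 : N = 0
          · have hne : ¬ (G.nbhd v).Nonempty := by
              rw [nbhd_nonempty_iff, ← Finset.card_pos]; omega
            have hK0 : K = 0 := by
              have := Finset.card_filter_le (G.nbhdFinset v) (fun u => RML.sat G ψ' u)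
              omega
            rw [ind_of_false hne, hK0, hN0]
            norm_num
            rw [reluStar_of_one_le le_rfl, ind_of_true (hsat.2 (fun h => absurd h hne))]
          · have hne : (G.nbhd v).Nonempty := by
              rw [nbhd_nonempty_iff, ← Finset.card_pos]; omega
            rw [ind_of_true hne]
            have hKn : K ≤ n := le_trans (le_trans (Finset.card_filter_le _ _)
              (Finset.card_le_univ _)) (by simpa using hG)
            have hNn : N ≤ n := le_trans (Finset.card_le_univ _) (by simpa using hG)
            have ha : ((K : ℝ) / (N : ℝ)) ∈ ratios n := mem_ratios hKn hNn
            have hgg : g * (1 / g) = 1 := mul_one_div_cancel hg0.ne'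
            by_cases hra : (r : ℝ) ≤ (K : ℝ) / (N : ℝ)
            · rw [ind_of_true (hsat.2 (fun _ => hra))]
              apply reluStar_of_one_le
              nlinarith [mul_nonneg (sub_nonneg.2 hra) (le_of_lt (one_div_pos.2 hg0))]
            · push_neg at hra
              rw [ind_of_false (by rw [hsat]; push_neg; exact ⟨hne, hra⟩)]
              apply reluStar_of_nonpos
              have hle : (K : ℝ) / (N : ℝ) ≤ (r : ℝ) - g := le_sub_gapBelow ha hra
              nlinarith [mul_le_mul_of_nonneg_right (sub_le_sub_right hle (r : ℝ))
                (le_of_lt (one_div_pos.2 hg0))]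
        | diaGt r ψ' =>
          subst hψ
          have hch : ∃ j, j < m ∧ l[j]? = some ψ' := hg m _ hsome
          obtain ⟨hci, hcisome⟩ := childIdx_spec hch
          have hcil : childIdx l m ψ' < l.length := (List.getElem?_eq_some_iff.1 hcisome).1
          set g := gapAbove n (r : ℝ) with hgdef
          have hg0 : 0 < g := gapAbove_pos n (r : ℝ)
          have hC : ∀ j : Fin (dim l), Cmat l m j (idxF l m hm) = 0 := by
            intro j; unfold Cmat; rw [if_pos hpos, hsome]
          have hA : ∀ j : Fin (dim l), Amat n l m j (idxF l m hm)
              = (if j.val = Fintype.card α + 1 + childIdx l m ψ' then (1 / g) else 0)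
                + (if j.val = Fintype.card α then -((1 / g) * (r : ℝ)) else 0) := by
            intro j; unfold Amat; rw [if_pos hpos, hsome]
          have hb : bvec l m (idxF l m hm) = 0 := by
            unfold bvec; rw [if_pos hpos, hsome]
          rw [Finset.sum_congr rfl (fun j _ => by rw [hC j, mul_zero]),
            Finset.sum_const_zero,
            Finset.sum_congr rfl (fun j _ => by rw [hA j]),
            sum_ite_add (fun j : Fin ((gnn n l i0).δ (m+1)) => Agg.mean.apply (G.nbhdFinset v)
                (fun u => (gnn n l i0).feat Agg.mean G (m+1) u j)) _ _
              (idxF_lt hcil) (cα_lt_dim l) (1 / g) (-((1 / g) * (r : ℝ))),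
            hb, zero_add, add_zero]
          have hxa1 : Agg.mean.apply (G.nbhdFinset v)
              (fun u => (gnn n l i0).feat Agg.mean G (m+1) u
                ⟨Fintype.card α + 1 + childIdx l m ψ', idxF_lt hcil⟩)
              = (((G.nbhdFinset v).filter (fun u => RML.sat G ψ' u)).card : ℝ)
                  / ((G.nbhdFinset v).card : ℝ) := by
            rw [mean_apply]
            congr 1
            have hup : ∀ u : G.V, (gnn n l i0).feat Agg.mean G (m+1) u
                ⟨Fintype.card α + 1 + childIdx l m ψ', idxF_lt hcil⟩
                = ind (RML.sat G ψ' u) := fun u => (ih u).2.2 _ hcil ψ' hcisome hci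
            rw [Finset.sum_congr rfl (fun u _ => hup u), sum_ind]
          have hxa2 : Agg.mean.apply (G.nbhdFinset v)
              (fun u => (gnn n l i0).feat Agg.mean G (m+1) u
                ⟨Fintype.card α, cα_lt_dim l⟩)
              = ind ((G.nbhd v).Nonempty) := by
            have hup2 : ∀ u : G.V, (gnn n l i0).feat Agg.mean G (m+1) u
                ⟨Fintype.card α, cα_lt_dim l⟩ = (1:ℝ) := fun u => (ih u).2.1
            rw [mean_apply, Finset.sum_congr rfl (fun u _ => hup2 u),
              Finset.sum_const, nsmul_eq_mul, mul_one]
            by_cases hN : (G.nbhdFinset v).card = 0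
            · rw [hN, ind_of_false]
              · norm_num
              · rw [nbhd_nonempty_iff, ← Finset.card_pos, hN]
                simp
            · rw [div_self (by exact_mod_cast hN), ind_of_true]
              rw [nbhd_nonempty_iff, ← Finset.card_pos]
              omega
          rw [hxa1, hxa2]
          set K := ((G.nbhdFinset v).filter (fun u => RML.sat G ψ' u)).card with hK
          set N := (G.nbhdFinset v).card with hN
          have hsat : RML.sat G (RML.diaGt r ψ') v
              ↔ ((G.nbhd v).Nonempty ∧ (r : ℝ) < (K : ℝ) / (N : ℝ)) := by
            show ((G.nbhd v).Nonempty ∧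
              (r : ℝ) < ({u | G.adj v u ∧ RML.sat G ψ' u}.ncard : ℝ) / ((G.nbhd v).ncard : ℝ)) ↔ _
            rw [satSet_ncard, nbhd_ncard]
          by_cases hN0 : N = 0
          · have hne : ¬ (G.nbhd v).Nonempty := by
              rw [nbhd_nonempty_iff, ← Finset.card_pos]; omega
            have hK0 : K = 0 := by
              have := Finset.card_filter_le (G.nbhdFinset v) (fun u => RML.sat G ψ' u)
              omega
            rw [ind_of_false hne, hK0, hN0]
            norm_num
            rw [reluStar_of_nonpos le_rfl, ind_of_false (fun h => absurd (hsat.1 h).1 hne)]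
          · have hne : (G.nbhd v).Nonempty := by
              rw [nbhd_nonempty_iff, ← Finset.card_pos]; omega
            rw [ind_of_true hne]
            have hKn : K ≤ n := le_trans (le_trans (Finset.card_filter_le _ _)
              (Finset.card_le_univ _)) (by simpa using hG)
            have hNn : N ≤ n := le_trans (Finset.card_le_univ _) (by simpa using hG)
            have ha : ((K : ℝ) / (N : ℝ)) ∈ ratios n := mem_ratios hKn hNn
            have hgg : g * (1 / g) = 1 := mul_one_div_cancel hg0.ne'
            by_cases hra : (r : ℝ) < (K : ℝ) / (N : ℝ)
            · rw [ind_of_true (hsat.2 ⟨hne, hra⟩)]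
              apply reluStar_of_one_le
              have hge : (r : ℝ) + g ≤ (K : ℝ) / (N : ℝ) := add_gapAbove_le ha hra
              nlinarith [mul_le_mul_of_nonneg_right (sub_le_sub_right hge (r : ℝ))
                (le_of_lt (one_div_pos.2 hg0))]
            · push_neg at hra
              rw [ind_of_false (by rw [hsat]; rintro ⟨-, h⟩; exact absurd h (not_lt.2 hra))]
              apply reluStar_of_nonpos
              nlinarith [mul_nonneg (sub_nonneg.2 hra) (le_of_lt (one_div_pos.2 hg0))]

end Stmt4


/-- For every RML formula φ and every n ≥ 1, there exists a simple
Mean-GNN with truncated ReLU activation that accepts a pointed graph with at most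
n vertices iff the graph satisfies φ. -/
theorem stmt4 {α : Type} [Fintype α] (φ : RML α) (n : ℕ) (hn : 1 ≤ n) :
    ∃ 𝒢 : GNN α, 𝒢.IsSimple reluStar ∧
      ∀ (G : LabeledGraph α) (v : G.V), Fintype.card G.V ≤ n →
        (𝒢.accepts Agg.mean G v ↔ RML.sat G φ v) := by
  classical
  obtain ⟨l', hl'⟩ := Stmt4.subs_snoc φ
  set l := Stmt4.subs φ with hldef
  have hg : Stmt4.Good l := Stmt4.good_subs φ
  have hm : l'.length < l.length := by
    rw [hl']; simp
  have hlast : l[l'.length]? = some φ := by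
    rw [hl', List.getElem?_append_right (le_refl _)]
    simp
  set i0 := Stmt4.idxF l l'.length hm with hi0
  refine ⟨Stmt4.gnn n l i0, Stmt4.gnn_simple n l i0, ?_⟩
  intro G v hGn
  have hinv := (Stmt4.invariant n l hg i0 G hGn l.length v).2.2
    l'.length hm φ hlast (by omega)
  have hacc : (Stmt4.gnn n l i0).accepts Agg.mean G v
      ↔ (1:ℝ) ≤ (Stmt4.gnn n l i0).feat Agg.mean G (l.length + 1) v i0 := by
    unfold GNN.accepts
    have hcs : (Stmt4.gnn n l i0).clsStrict = false := rfl
    rw [hcs]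
    simp only [Bool.false_eq_true, if_false]
    rfl
  rw [hacc, hinv]
  unfold Stmt4.ind
  by_cases h : RML.sat G φ v
  · simp [h]
  · simp [h]
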